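/- Let 0 < p < 1/2 and let α : ℕ → ℕ be a strictly increasing sequence of positive integers satisfying λ·∑_{η=0}^{k-1} M_{α_η}^{1/p}/α_η < M_{α_k}^{1/p}/α_k for every k ≥ 1. Then for every k ≥ 1, every j with 1 ≤ j ≤ M_{α_k}, and every x ∈ G_m, |∑_{v=0}^{j-1} ĉ(v)·ψ_v(x)| ≤ 4·λ·M_{α_{k-1}}^{1/p}/α_{k-1}. -/

import Mathlib

open MeasureTheory Complex Finset ENNReal

noncomputable section

namespace VilenkinT

variable (m : ℕ → ℕ)

/-- The generalized powers `M_0 = 1`, `M_{k+1} = m_k M_k`. -/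
def Mgen : ℕ → ℕ
  | 0 => 1
  | k + 1 => m k * Mgen k

/-- The Vilenkin group (as a measurable space of coordinate sequences). -/
abbrev G := ∀ k : ℕ, Fin (m k)

/-- The `j`-th digit of `n` in the generalized number system based on `m`. -/
def digit (n j : ℕ) : ℕ := n / Mgen m j % m j

/-- The Vilenkin system `ψ_n(x) = ∏_k exp(2πi n_k x_k / m_k)`. -/
def psi (n : ℕ) (x : G m) : ℂ :=
  ∏' k : ℕ, Complex.exp (2 * Real.pi * Complex.I * (digit m n k : ℂ) * ((x k : ℕ) : ℂ) / (m k : ℂ))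

/-- Partial sums of the Vilenkin–Fourier series built from coefficients `fhat`. -/
def partialSum (fhat : ℕ → ℂ) (n : ℕ) (x : G m) : ℂ :=
  ∑ k ∈ Finset.range n, fhat k * psi m k x

/-- `Q_n := ∑_{k=0}^{n-1} q_k`. -/
def Qsum (q : ℕ → ℝ) (n : ℕ) : ℝ := ∑ k ∈ Finset.range n, q k

/-- The `T`-means `T_n f = (1/Q_n) ∑_{k=0}^{n-1} q_k S_k f`. -/
def Tmean (q : ℕ → ℝ) (fhat : ℕ → ℂ) (n : ℕ) (x : G m) : ℂ :=
  (1 / (Qsum q n : ℂ)) * ∑ k ∈ Finset.range n, (q k : ℂ) * partialSum m fhat k x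

/-- The maximal operator `T^* f = sup_{n ≥ 1} |T_n f|` (with values in `ℝ≥0∞`). -/
def Tstar (q : ℕ → ℝ) (fhat : ℕ → ℂ) (x : G m) : ℝ≥0∞ :=
  ⨆ (n : ℕ) (_ : 1 ≤ n), ENNReal.ofReal (norm (Tmean m q fhat n x))

/-- The weak-`L_p` norm `sup_{t>0} t μ(g > t)^{1/p}` of an `ℝ≥0∞`-valued function. -/
def weakNorm (μ : Measure (G m)) (p : ℝ) (g : G m → ℝ≥0∞) : ℝ≥0∞ :=
  ⨆ (t : ℝ) (_ : 0 < t), ENNReal.ofReal t * (μ {x | ENNReal.ofReal t < g x}) ^ (1 / p)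

/-- The weak-`L_p` norm of a complex valued function. -/
def weakNormC (μ : Measure (G m)) (p : ℝ) (g : G m → ℂ) : ℝ≥0∞ :=
  weakNorm m μ p fun x => ENNReal.ofReal (norm (g x))

/-- `μ` is the product of the uniform probability measures on the coordinates:
it is a probability measure giving each cylinder of length `n` measure `1/M_n`. -/
def IsHaar (μ : Measure (G m)) : Prop :=
  IsProbabilityMeasure μ ∧
    ∀ (n : ℕ) (x : G m), μ {y | ∀ i < n, y i = x i} = ((Mgen m n : ℝ≥0∞))⁻¹

/-- The σ-algebra generated by the first `n` coordinates. -/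
def coordMS (n : ℕ) : MeasurableSpace (G m) :=
  MeasurableSpace.comap (fun x (i : Fin n) => x i) inferInstance

/-- `f = (f^{(n)})` is a martingale with respect to the filtration of coordinate σ-algebras. -/
def IsVMartingale (μ : Measure (G m)) (f : ℕ → G m → ℂ) : Prop :=
  (∀ n, Integrable (f n) μ) ∧ (∀ n, StronglyMeasurable[coordMS m n] (f n)) ∧
    ∀ n, μ[f (n + 1)|coordMS m n] =ᵐ[μ] f n

/-- `fhat` is the coefficient function of the martingale `f`. -/
def IsCoeff (μ : Measure (G m)) (f : ℕ → G m → ℂ) (fhat : ℕ → ℂ) : Prop :=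
  ∀ k i, i < Mgen m k → fhat i = ∫ x, f k x * (starRingEnd ℂ) (psi m i x) ∂μ

/-- The martingale Hardy space (quasi-)norm `‖f‖_{H_p} = (∫ (sup_n |f^{(n)}|)^p dμ)^{1/p}`. -/
def HardyNorm (μ : Measure (G m)) (p : ℝ) (f : ℕ → G m → ℂ) : ℝ≥0∞ :=
  (∫⁻ x, (⨆ n, ENNReal.ofReal (norm (f n x))) ^ p ∂μ) ^ (1 / p)

/-- The Vilenkin–Fourier coefficients of an integrable function. -/
def fourierCoeff (μ : Measure (G m)) (f : G m → ℂ) (n : ℕ) : ℂ :=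
  ∫ x, f x * (starRingEnd ℂ) (psi m n x) ∂μ

/-- The Fejér means `σ_n f = (1/n) ∑_{k=1}^n S_k f`. -/
def sigmaMean (fhat : ℕ → ℂ) (n : ℕ) (x : G m) : ℂ :=
  (1 / (n : ℂ)) * ∑ k ∈ Finset.Icc 1 n, partialSum m fhat k x

/-- The maximal Fejér operator `σ^* f = sup_{n ≥ 1} |σ_n f|`. -/
def sigmaStar (fhat : ℕ → ℂ) (x : G m) : ℝ≥0∞ :=
  ⨆ (n : ℕ) (_ : 1 ≤ n), ENNReal.ofReal (norm (sigmaMean m fhat n x))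

/-- `l_n := ∑_{k=1}^{n-1} 1/k`. -/
def lsum (n : ℕ) : ℝ := ∑ k ∈ Finset.Icc 1 (n - 1), (1 : ℝ) / k

/-- The Riesz logarithmic means `R_n f = (1/l_n) ∑_{k=1}^{n-1} S_k f / k`. -/
def Riesz (fhat : ℕ → ℂ) (n : ℕ) (x : G m) : ℂ :=
  (1 / (lsum n : ℂ)) * ∑ k ∈ Finset.Icc 1 (n - 1), partialSum m fhat k x / (k : ℂ)

/-- The maximal Riesz operator `R^* f = sup_{n ≥ 2} |R_n f|`. -/
def RieszStar (fhat : ℕ → ℂ) (x : G m) : ℝ≥0∞ :=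
  ⨆ (n : ℕ) (_ : 2 ≤ n), ENNReal.ofReal (norm (Riesz m fhat n x))

/-- The Cesàro numbers `A_n^α = ∏_{j=1}^n (α+j)/j`. -/
def Aces (α : ℝ) (n : ℕ) : ℝ := ∏ j ∈ Finset.Icc 1 n, (α + j) / j

/-- The means `U_n^α f = (1/A_n^α) ∑_{k=0}^{n-1} A_k^{α-1} S_k f`. -/
def Umean (α : ℝ) (fhat : ℕ → ℂ) (n : ℕ) (x : G m) : ℂ :=
  (1 / (Aces α n : ℂ)) * ∑ k ∈ Finset.range n, (Aces (α - 1) k : ℂ) * partialSum m fhat k x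

/-- The maximal operator `U^{α,*} f = sup_{n ≥ 1} |U_n^α f|`. -/
def Ustar (α : ℝ) (fhat : ℕ → ℂ) (x : G m) : ℝ≥0∞ :=
  ⨆ (n : ℕ) (_ : 1 ≤ n), ENNReal.ofReal (norm (Umean m α fhat n x))

/-- The weights `q_0 = 1`, `q_k = k^{α-1}` generating the means `V_n^α`. -/
def qV (α : ℝ) (k : ℕ) : ℝ := if k = 0 then 1 else (k : ℝ) ^ (α - 1)

/-- The weights `q_k = max(0, log^{(β)}(k^α))` generating the means `B_n^{α,β}`. -/
def qB (α : ℝ) (β : ℕ) (k : ℕ) : ℝ := max 0 (Real.log^[β] ((k : ℝ) ^ α))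

/-- The maximal operator `B^{α,β,*} f = sup_{n : Q_n > 0} |B_n^{α,β} f|`. -/
def Bstar (α : ℝ) (β : ℕ) (fhat : ℕ → ℂ) (x : G m) : ℝ≥0∞ :=
  ⨆ (n : ℕ) (_ : 0 < Qsum (qB α β) n), ENNReal.ofReal (norm (Tmean m (qB α β) fhat n x))

open Classical in
/-- The coefficient function `ĉ` of the counterexample martingale:
`ĉ(v) = M_{α_k}^{1/p-1}/α_k` for `M_{α_k} ≤ v < M_{α_k + 1}`, and `0` otherwise. -/
def chat (p : ℝ) (a : ℕ → ℕ) (v : ℕ) : ℝ :=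
  if h : ∃ k, Mgen m (a k) ≤ v ∧ v < Mgen m (a k + 1) then
    (Mgen m (a h.choose) : ℝ) ^ (1 / p - 1) / (a h.choose : ℝ)
  else 0

lemma Mgen_pos (hm : ∀ k, 2 ≤ m k) : ∀ n, 0 < Mgen m n
  | 0 => Nat.one_pos
  | n + 1 => Nat.mul_pos (by have := hm n; omega) (Mgen_pos hm n)

lemma Mgen_le (hm : ∀ k, 2 ≤ m k) {i j : ℕ} (h : i ≤ j) : Mgen m i ≤ Mgen m j := by
  induction j with
  | zero => simpa [Nat.le_zero.1 h] using le_refl _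
  | succ j ih =>
    rcases Nat.lt_or_ge i (j + 1) with h' | h'
    · have h1 := ih (Nat.lt_succ_iff.1 h')
      have h2 := hm j
      have h3 := Mgen_pos m hm j
      calc Mgen m i ≤ Mgen m j := h1
        _ ≤ m j * Mgen m j := Nat.le_mul_of_pos_left _ (by omega)
        _ = Mgen m (j + 1) := rfl
    · have : i = j + 1 := le_antisymm h h'
      simp [this]

lemma two_pow_le_Mgen (hm : ∀ k, 2 ≤ m k) : ∀ n, 2 ^ n ≤ Mgen m n
  | 0 => le_refl 1
  | n + 1 => by
    have h1 := two_pow_le_Mgen hm n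
    have h2 := hm n
    calc 2 ^ (n + 1) = 2 * 2 ^ n := by ring
      _ ≤ m n * Mgen m n := Nat.mul_le_mul h2 h1
      _ = Mgen m (n + 1) := rfl

lemma digit_eq_zero {n k : ℕ} (h : n < Mgen m k) : digit m n k = 0 := by
  simp [digit, Nat.div_eq_of_lt h]

lemma abs_psi (hm : ∀ k, 2 ≤ m k) (n : ℕ) (x : G m) : norm (psi m n x) = 1 := by
  have key : ∀ b ∉ Finset.range (n + 1),
      Complex.exp (2 * Real.pi * Complex.I * (digit m n b : ℂ) * ((x b : ℕ) : ℂ) / (m b : ℂ))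
        = 1 := by
    intro b hb
    have hb' : n + 1 ≤ b := by simpa using hb
    have hlt : n < Mgen m b := by
      have h1 : n < 2 ^ n := Nat.lt_two_pow_self
      have h2 : (2 : ℕ) ^ n ≤ 2 ^ b := Nat.pow_le_pow_right (by norm_num) (by omega)
      exact lt_of_lt_of_le (lt_of_lt_of_le h1 h2) (two_pow_le_Mgen m hm b)
    rw [digit_eq_zero m hlt]
    simp
  rw [psi, tprod_eq_prod key, norm_prod]
  apply Finset.prod_eq_one
  intro i _
  have heq : (2 * Real.pi * Complex.I * (digit m n i : ℂ) * ((x i : ℕ) : ℂ) / (m i : ℂ))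
      = ((2 * Real.pi * (digit m n i : ℝ) * ((x i : ℕ) : ℝ) / (m i : ℝ) : ℝ) : ℂ) * Complex.I := by
    push_cast
    ring
  rw [heq, Complex.norm_exp_ofReal_mul_I]

lemma block_unique (hm : ∀ k, 2 ≤ m k) {a : ℕ → ℕ} (ha : StrictMono a) {k l v : ℕ}
    (hk1 : Mgen m (a k) ≤ v) (hk2 : v < Mgen m (a k + 1))
    (hl1 : Mgen m (a l) ≤ v) (hl2 : v < Mgen m (a l + 1)) : k = l := by
  rcases lt_trichotomy k l with h | h | h
  · have h1 : a k + 1 ≤ a l := ha h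
    have := Mgen_le m hm h1
    omega
  · exact h
  · have h1 : a l + 1 ≤ a k := ha h
    have := Mgen_le m hm h1
    omega

lemma chat_nonneg (p : ℝ) (a : ℕ → ℕ) (v : ℕ) : 0 ≤ chat m p a v := by
  rw [chat]
  split_ifs with h
  · positivity
  · exact le_refl 0

lemma chat_eq (hm : ∀ k, 2 ≤ m k) (p : ℝ) {a : ℕ → ℕ} (ha : StrictMono a) {η v : ℕ}
    (h1 : Mgen m (a η) ≤ v) (h2 : v < Mgen m (a η + 1)) :
    chat m p a v = (Mgen m (a η) : ℝ) ^ (1 / p - 1) / (a η : ℝ) := by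
  have hex : ∃ k, Mgen m (a k) ≤ v ∧ v < Mgen m (a k + 1) := ⟨η, h1, h2⟩
  rw [chat, dif_pos hex]
  have hspec := hex.choose_spec
  have heq : hex.choose = η := block_unique m hm ha hspec.1 hspec.2 h1 h2
  rw [heq]

/-- Partial-sum estimate for the counterexample coefficients: if `a` is a
strictly increasing sequence of positive integers satisfying
`λ ∑_{η<k} M_{a_η}^{1/p}/a_η < M_{a_k}^{1/p}/a_k`, then for `k ≥ 1`, `1 ≤ j ≤ M_{a_k}` and
every `x`, `|∑_{v<j} ĉ(v) ψ_v(x)| ≤ 4 λ M_{a_{k-1}}^{1/p}/a_{k-1}`. -/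
theorem partialSum_chat_bound
    (m : ℕ → ℕ) (hm : ∀ k, 2 ≤ m k) (Λ : ℕ) (hΛ : IsLUB (Set.range m) Λ)
    (p : ℝ) (hp : 0 < p) (hp2 : p < 1 / 2)
    (a : ℕ → ℕ) (ha : StrictMono a) (ha1 : ∀ k, 1 ≤ a k)
    (hsep : ∀ k : ℕ, 1 ≤ k →
      (Λ : ℝ) * ∑ η ∈ Finset.range k, (Mgen m (a η) : ℝ) ^ (1 / p) / (a η : ℝ) <
        (Mgen m (a k) : ℝ) ^ (1 / p) / (a k : ℝ)) :
    ∀ k : ℕ, 1 ≤ k → ∀ j : ℕ, 1 ≤ j → j ≤ Mgen m (a k) → ∀ x : G m,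
      norm (partialSum m (fun v => (chat m p a v : ℂ)) j x) ≤
        4 * (Λ : ℝ) * (Mgen m (a (k - 1)) : ℝ) ^ (1 / p) / (a (k - 1) : ℝ) := by
  have hΛm : ∀ i, m i ≤ Λ := fun i => hΛ.1 (Set.mem_range_self i)
  have hΛ2 : (2 : ℝ) ≤ (Λ : ℝ) := by exact_mod_cast (hm 0).trans (hΛm 0)
  set t : ℕ → ℝ := fun η => (Mgen m (a η) : ℝ) ^ (1 / p) / (a η : ℝ) with ht
  have htnonneg : ∀ η, 0 ≤ t η := by
    intro η
    simp only [ht]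
    positivity
  intro k hk j hj1 hj2 x
  obtain ⟨k', rfl⟩ : ∃ k', k = k' + 1 := ⟨k - 1, by omega⟩
  set B : Finset ℕ := (Finset.range (k' + 1)).biUnion
      (fun η => Finset.Ico (Mgen m (a η)) (Mgen m (a η + 1))) with hB
  -- Step 1: pointwise bound by the sum of coefficients
  have h1 : norm (partialSum m (fun v => (chat m p a v : ℂ)) j x)
      ≤ ∑ v ∈ Finset.range j, chat m p a v := by
    rw [partialSum]
    refine (norm_sum_le _ _).trans ?_
    apply Finset.sum_le_sum
    intro v _
    rw [norm_mul, abs_psi m hm, mul_one, Complex.norm_real]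
    exact le_of_eq (abs_of_nonneg (chat_nonneg m p a v))
  -- Step 2: enlarge the range of summation
  have h2 : ∑ v ∈ Finset.range j, chat m p a v
      ≤ ∑ v ∈ Finset.range (Mgen m (a (k' + 1))), chat m p a v :=
    Finset.sum_le_sum_of_subset_of_nonneg (Finset.range_subset_range.2 hj2)
      (fun v _ _ => chat_nonneg m p a v)
  -- Step 3: the support inside that range is contained in B
  have hBsub : B ⊆ Finset.range (Mgen m (a (k' + 1))) := by
    intro v hv
    simp only [hB, Finset.mem_biUnion, Finset.mem_range, Finset.mem_Ico] at hv ⊢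
    obtain ⟨η, hη, hv1, hv2⟩ := hv
    have h1 : a η + 1 ≤ a (k' + 1) := ha (by omega)
    have := Mgen_le m hm h1
    omega
  have hzero : ∀ v ∈ Finset.range (Mgen m (a (k' + 1))), v ∉ B → chat m p a v = 0 := by
    intro v hv hvB
    rw [chat, dif_neg]
    rintro ⟨l, hl1, hl2⟩
    apply hvB
    simp only [hB, Finset.mem_biUnion, Finset.mem_range, Finset.mem_Ico]
    refine ⟨l, ?_, hl1, hl2⟩
    by_contra hlk
    push_neg at hlk
    have h1 : a (k' + 1) ≤ a l := ha.monotone (by omega)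
    have h2 := Mgen_le m hm h1
    have h3 := Finset.mem_range.1 hv
    omega
  have h3 : ∑ v ∈ Finset.range (Mgen m (a (k' + 1))), chat m p a v
      = ∑ v ∈ B, chat m p a v := (Finset.sum_subset hBsub hzero).symm
  -- Step 4: the blocks are pairwise disjoint
  have key : ∀ i l : ℕ, i < l →
      Disjoint (Finset.Ico (Mgen m (a i)) (Mgen m (a i + 1)))
        (Finset.Ico (Mgen m (a l)) (Mgen m (a l + 1))) := by
    intro i l h
    rw [Finset.disjoint_left]
    intro v hv hv'
    simp only [Finset.mem_Ico] at hv hv'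
    have h1 : a i + 1 ≤ a l := ha h
    have := Mgen_le m hm h1
    omega
  have hdisj : (↑(Finset.range (k' + 1)) : Set ℕ).PairwiseDisjoint
      (fun η => Finset.Ico (Mgen m (a η)) (Mgen m (a η + 1))) := by
    intro i _ l _ hil
    rcases hil.lt_or_gt with h | h
    · exact key _ _ h
    · exact (key _ _ h).symm
  have h4 : ∑ v ∈ B, chat m p a v
      = ∑ η ∈ Finset.range (k' + 1),
          ∑ v ∈ Finset.Ico (Mgen m (a η)) (Mgen m (a η + 1)), chat m p a v :=
    Finset.sum_biUnion hdisj
  -- Step 5: bound each block sum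
  have h5 : ∀ η ∈ Finset.range (k' + 1),
      ∑ v ∈ Finset.Ico (Mgen m (a η)) (Mgen m (a η + 1)), chat m p a v ≤ (Λ : ℝ) * t η := by
    intro η _
    have hconst : ∀ v ∈ Finset.Ico (Mgen m (a η)) (Mgen m (a η + 1)),
        chat m p a v = (Mgen m (a η) : ℝ) ^ (1 / p - 1) / (a η : ℝ) := by
      intro v hv
      rw [Finset.mem_Ico] at hv
      exact chat_eq m hm p ha hv.1 hv.2
    rw [Finset.sum_congr rfl hconst, Finset.sum_const, Nat.card_Ico, nsmul_eq_mul]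
    have hM1pos : (0 : ℝ) < (Mgen m (a η) : ℝ) := by exact_mod_cast Mgen_pos m hm _
    have hd : ((Mgen m (a η + 1) - Mgen m (a η) : ℕ) : ℝ) ≤ (Λ : ℝ) * (Mgen m (a η) : ℝ) := by
      have h1 : Mgen m (a η + 1) = m (a η) * Mgen m (a η) := rfl
      have h2 : m (a η) ≤ Λ := hΛm _
      have h3 : Mgen m (a η + 1) - Mgen m (a η) ≤ Λ * Mgen m (a η) := by
        rw [h1]
        calc m (a η) * Mgen m (a η) - Mgen m (a η) ≤ m (a η) * Mgen m (a η) := Nat.sub_le _ _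
          _ ≤ Λ * Mgen m (a η) := Nat.mul_le_mul_right _ h2
      exact_mod_cast h3
    have hcc : 0 ≤ (Mgen m (a η) : ℝ) ^ (1 / p - 1) / (a η : ℝ) := by positivity
    have hgoal : ((Mgen m (a η + 1) - Mgen m (a η) : ℕ) : ℝ) *
        ((Mgen m (a η) : ℝ) ^ (1 / p - 1) / (a η : ℝ)) ≤
        ((Λ : ℝ) * (Mgen m (a η) : ℝ)) * ((Mgen m (a η) : ℝ) ^ (1 / p - 1) / (a η : ℝ)) :=
      mul_le_mul_of_nonneg_right hd hcc
    calc ((Mgen m (a η + 1) - Mgen m (a η) : ℕ) : ℝ) *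
        ((Mgen m (a η) : ℝ) ^ (1 / p - 1) / (a η : ℝ))
        ≤ ((Λ : ℝ) * (Mgen m (a η) : ℝ)) * ((Mgen m (a η) : ℝ) ^ (1 / p - 1) / (a η : ℝ)) := hgoal
      _ = (Λ : ℝ) * t η := by
          have hpow : (Mgen m (a η) : ℝ) ^ (1 / p) =
              (Mgen m (a η) : ℝ) * (Mgen m (a η) : ℝ) ^ (1 / p - 1) := by
            rw [Real.rpow_sub hM1pos, Real.rpow_one]
            field_simp
          simp only [ht, hpow]
          ring
  have h6 : ∑ η ∈ Finset.range (k' + 1),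
      ∑ v ∈ Finset.Ico (Mgen m (a η)) (Mgen m (a η + 1)), chat m p a v
      ≤ (Λ : ℝ) * ∑ η ∈ Finset.range (k' + 1), t η := by
    rw [Finset.mul_sum]
    exact Finset.sum_le_sum h5
  -- Step 6: use the separation hypothesis
  have hsum' : (Λ : ℝ) * ∑ η ∈ Finset.range k', t η ≤ t k' := by
    rcases Nat.eq_zero_or_pos k' with h0 | h1
    · subst h0
      simpa using htnonneg 0
    · exact (hsep k' h1).le
  have h7 : (Λ : ℝ) * ∑ η ∈ Finset.range (k' + 1), t η ≤ 4 * (Λ : ℝ) * t k' := by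
    rw [Finset.sum_range_succ, mul_add]
    have ht0 := htnonneg k'
    nlinarith [hsum']
  have hfinal : 4 * (Λ : ℝ) * t k' =
      4 * (Λ : ℝ) * (Mgen m (a (k' + 1 - 1)) : ℝ) ^ (1 / p) / (a (k' + 1 - 1) : ℝ) := by
    simp only [Nat.add_sub_cancel, ht]
    ring
  rw [← hfinal]
  calc norm (partialSum m (fun v => (chat m p a v : ℂ)) j x)
      ≤ ∑ v ∈ Finset.range j, chat m p a v := h1
    _ ≤ ∑ v ∈ Finset.range (Mgen m (a (k' + 1))), chat m p a v := h2
    _ = ∑ v ∈ B, chat m p a v := h3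
    _ = ∑ η ∈ Finset.range (k' + 1),
          ∑ v ∈ Finset.Ico (Mgen m (a η)) (Mgen m (a η + 1)), chat m p a v := h4
    _ ≤ (Λ : ℝ) * ∑ η ∈ Finset.range (k' + 1), t η := h6
    _ ≤ 4 * (Λ : ℝ) * t k' := h7

end VilenkinT
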